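/- Assume Schanuel's conjecture: for every n ≥ 1 and all complex numbers z₁,…,zₙ that are linearly independent over ℚ, trdeg_ℚ ℚ(z₁,…,zₙ, exp(z₁),…,exp(zₙ)) ≥ n. Then e = exp(1) and π are algebraically independent over ℚ. -/

import Mathlib

open Polynomial IntermediateField

set_option maxHeartbeats 1000000
set_option synthInstance.maxHeartbeats 400000

/-- The transcendence degree over `ℚ` of the subfield of `ℂ` generated by a set `s`:
the supremum of the cardinalities of subsets of that subfield that are algebraically
independent over `ℚ`. -/
noncomputable def trdegRat (s : Set ℂ) : Cardinal :=
  ⨆ t : {t : Set ℂ // t ⊆ (Subfield.closure s : Set ℂ) ∧ AlgebraicIndependent ℚ ((↑) : t → ℂ)},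
    Cardinal.mk t.1

private lemma mem_isAlg {X : IntermediateField ℚ ℂ} {a : ℂ} (h : a ∈ X) : IsAlgebraic X a := by
  exact isAlgebraic_algebraMap (⟨a, h⟩ : X)

private lemma pair_swap {a b : ℂ} (h : AlgebraicIndependent ℚ ![a, b]) :
    AlgebraicIndependent ℚ ![b, a] := by
  have h2 := h.comp ![1, 0] (by decide)
  have heq : (![a, b] ∘ ![1, 0] : Fin 2 → ℂ) = ![b, a] := by
    funext i; fin_cases i <;> rfl
  rwa [heq] at h2

private def optFinEquiv : Option Unit ≃ Fin 2 where
  toFun o := o.elim 1 fun _ => 0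
  invFun := ![some (), none]
  left_inv o := by rcases o with _ | ⟨⟩ <;> rfl
  right_inv i := by fin_cases i <;> rfl

private lemma pair_iff (a b : ℂ) :
    AlgebraicIndependent ℚ ![a, b] ↔
      Transcendental ℚ a ∧ Transcendental (Algebra.adjoin ℚ ({a} : Set ℂ)) b := by
  have hcomp : (![a, b] ∘ optFinEquiv) = fun o : Option Unit => o.elim b fun _ => a := by
    funext o; rcases o with _ | ⟨⟩ <;> rfl
  have key : AlgebraicIndependent ℚ ![a, b] ↔
      AlgebraicIndependent ℚ (fun o : Option Unit => o.elim b fun _ => a) := by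
    rw [← hcomp]; exact (algebraicIndependent_equiv optFinEquiv).symm
  constructor
  · intro h
    have h' := key.1 h
    have ha : AlgebraicIndependent ℚ (fun _ : Unit => a) :=
      h'.comp some (Option.some_injective _)
    refine ⟨algebraicIndependent_unique_type_iff.1 ha, ?_⟩
    have := (ha.option_iff_transcendental b).1 h'
    rwa [Set.range_const] at this
  · rintro ⟨ht, htr⟩
    have ha : AlgebraicIndependent ℚ (fun _ : Unit => a) :=
      algebraicIndependent_unique_type_iff.2 ht
    exact key.2 ((ha.option_iff_transcendental b).2 (by rwa [Set.range_const]))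

private lemma descent {w z : ℂ}
    (h : IsAlgebraic (IntermediateField.adjoin ℚ ({w} : Set ℂ)) z) :
    IsAlgebraic (Algebra.adjoin ℚ ({w} : Set ℂ)) z := by
  set A := Algebra.adjoin ℚ ({w} : Set ℂ) with hA
  set K := IntermediateField.adjoin ℚ ({w} : Set ℂ) with hK
  have hle : A ≤ K.toSubalgebra := by
    apply Algebra.adjoin_le
    intro t ht
    rcases ht with rfl
    exact IntermediateField.mem_adjoin_simple_self ℚ _
  letI : Algebra A K := (Subalgebra.inclusion hle).toAlgebra
  haveI : IsScalarTower A K ℂ := IsScalarTower.of_algebraMap_eq fun _ => rfl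
  haveI : IsFractionRing A K := by
    refine ⟨?_, ?_, ?_⟩
    · rintro y
      rw [isUnit_iff_ne_zero]
      intro h0
      have hval0 := congrArg Subtype.val h0
      have hval : ((y : A) : ℂ) = ((0 : A) : ℂ) := hval0
      exact nonZeroDivisors.coe_ne_zero y (Subtype.ext hval)
    · rintro zz
      obtain ⟨r, s, hzz⟩ := (IntermediateField.mem_adjoin_simple_iff ℚ (zz : ℂ)).1 zz.2
      by_cases hs : Polynomial.aeval w s = 0
      · refine ⟨⟨0, 1⟩, ?_⟩
        have h0 : (zz : ℂ) = 0 := by rw [hzz, hs, div_zero]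
        apply Subtype.ext
        show ((zz : ℂ) * _ : ℂ) = _
        simp [h0]
      · refine ⟨⟨⟨Polynomial.aeval w r, ?_⟩,
          ⟨⟨Polynomial.aeval w s, ?_⟩, mem_nonZeroDivisors_of_ne_zero ?_⟩⟩, ?_⟩
        · exact Polynomial.aeval_mem_adjoin_singleton ℚ w
        · exact Polynomial.aeval_mem_adjoin_singleton ℚ w
        · intro h0
          exact hs (congrArg Subtype.val h0)
        · apply Subtype.ext
          show (zz : ℂ) * Polynomial.aeval w s = Polynomial.aeval w r
          rw [hzz, div_mul_cancel₀ _ hs]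
    · intro p q hpq
      refine ⟨1, ?_⟩
      have hval0 := congrArg Subtype.val hpq
      have hval : (p : ℂ) = (q : ℂ) := hval0
      rw [Subtype.ext hval]
  exact (IsFractionRing.isAlgebraic_iff A K ℂ).mpr h

private lemma alg_over_adjoin {X : IntermediateField ℚ ℂ} {s : Set ℂ}
    (hs : ∀ a ∈ s, IsAlgebraic X a) {y : ℂ}
    (hy : IsAlgebraic (IntermediateField.adjoin ℚ s) y) : IsAlgebraic X y := by
  set N := IntermediateField.adjoin X s with hN
  haveI : Algebra.IsAlgebraic X N :=
    IntermediateField.isAlgebraic_adjoin fun a ha => (hs a ha).isIntegral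
  have hTN : ∀ c : ℂ, c ∈ IntermediateField.adjoin ℚ s → c ∈ N := by
    intro c hc
    have hle : IntermediateField.adjoin ℚ s ≤ N.restrictScalars ℚ :=
      IntermediateField.adjoin_le_iff.2 fun a ha => IntermediateField.subset_adjoin X s ha
    exact hle hc
  set T := IntermediateField.adjoin ℚ s with hT
  let f : T →+* N :=
    { toFun := fun c => ⟨c.1, hTN c.1 c.2⟩
      map_one' := rfl
      map_mul' := fun _ _ => rfl
      map_zero' := rfl
      map_add' := fun _ _ => rfl }
  have hfinj : Function.Injective f := by
    intro c d hcd
    have hval0 := congrArg Subtype.val hcd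
    have hval : (c : ℂ) = (d : ℂ) := hval0
    exact Subtype.ext hval
  obtain ⟨p, hp0, hpy⟩ := hy
  have hN' : IsAlgebraic N y := by
    refine ⟨p.map f, fun h0 => hp0 (Polynomial.map_injective f hfinj (by simpa using h0)), ?_⟩
    rw [Polynomial.aeval_def, Polynomial.eval₂_map]
    have heq : (algebraMap N ℂ).comp (f : T →+* N) = algebraMap T ℂ := RingHom.ext fun c => rfl
    rw [heq, ← Polynomial.aeval_def]
    exact hpy
  haveI : Algebra.IsIntegral X N := Algebra.isAlgebraic_iff_isIntegral.mp ‹_›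
  exact (isIntegral_trans y hN'.isIntegral).isAlgebraic

private lemma lemC {x y : ℂ} (hx : Transcendental ℚ x)
    (hxy : Transcendental (Algebra.adjoin ℚ ({x} : Set ℂ)) y) (w : ℂ)
    (hxw : IsAlgebraic (IntermediateField.adjoin ℚ ({w} : Set ℂ)) x)
    (hyw : IsAlgebraic (IntermediateField.adjoin ℚ ({w} : Set ℂ)) y) : False := by
  have hxw' : IsAlgebraic (Algebra.adjoin ℚ ({w} : Set ℂ)) x := descent hxw
  have h2 : ¬AlgebraicIndependent ℚ ![x, w] := fun h =>
    ((pair_iff w x).1 (pair_swap h)).2 hxw'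
  have hwx : IsAlgebraic (Algebra.adjoin ℚ ({x} : Set ℂ)) w := by
    by_contra hcon
    exact h2 ((pair_iff x w).2 ⟨hx, hcon⟩)
  have hwX : IsAlgebraic (IntermediateField.adjoin ℚ ({x} : Set ℂ)) w := by
    have hle : Algebra.adjoin ℚ ({x} : Set ℂ) ≤
        (IntermediateField.adjoin ℚ ({x} : Set ℂ)).toSubalgebra := by
      apply Algebra.adjoin_le
      intro t ht
      rcases ht with rfl
      exact IntermediateField.mem_adjoin_simple_self ℚ _
    exact hwx.tower_top_of_subalgebra_le hle
  have hyX : IsAlgebraic (IntermediateField.adjoin ℚ ({x} : Set ℂ)) y :=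
    alg_over_adjoin (fun a ha => by rcases ha with rfl; exact hwX) hyw
  exact hxy (descent hyX)

/-- Schanuel's conjecture implies that `e` and `π` are algebraically independent over `ℚ`. -/
theorem e_pi_algebraicIndependent_of_schanuel
    (schanuel : ∀ n : ℕ, 1 ≤ n → ∀ z : Fin n → ℂ, LinearIndependent ℚ z →
      (n : Cardinal) ≤ trdegRat (Set.range z ∪ Set.range fun i => Complex.exp (z i))) :
    AlgebraicIndependent ℚ ![Complex.exp 1, (Real.pi : ℂ)] := by
  classical
  set z : Fin 2 → ℂ := ![1, Complex.I * (Real.pi : ℂ)] with hz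
  have hlin : LinearIndependent ℚ z := by
    rw [hz, LinearIndependent.pair_iff]
    intro s t hst
    rw [Complex.ext_iff] at hst
    simp only [Rat.smul_def, Complex.add_re, Complex.add_im, Complex.mul_re, Complex.mul_im,
      Complex.one_re, Complex.one_im, Complex.I_re, Complex.I_im, Complex.ofReal_re,
      Complex.ofReal_im, Complex.ratCast_re, Complex.ratCast_im, Complex.zero_re,
      Complex.zero_im, mul_zero, zero_mul, mul_one, one_mul, sub_zero, add_zero,
      zero_add, zero_sub, neg_zero] at hst
    obtain ⟨h1, h2⟩ := hst
    constructor
    · exact_mod_cast h1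
    · rcases mul_eq_zero.1 h2 with h | h
      · exact_mod_cast h
      · exact absurd h Real.pi_ne_zero
  have h2 := schanuel 2 (by norm_num) z hlin
  set S := (Set.range z ∪ Set.range fun i => Complex.exp (z i) : Set ℂ) with hS
  have h1lt : (1 : Cardinal) < trdegRat S := by
    refine lt_of_lt_of_le ?_ h2
    exact_mod_cast one_lt_two
  rw [trdegRat] at h1lt
  obtain ⟨⟨T, hTsub, hTind⟩, hT⟩ := (lt_ciSup_iff' (Cardinal.bddAbove_range _)).1 h1lt
  rw [Cardinal.one_lt_iff_nontrivial] at hT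
  obtain ⟨⟨x, hxt⟩, ⟨y, hyt⟩, hne2⟩ := hT.exists_pair_ne
  have hxyne : x ≠ y := fun h => hne2 (Subtype.ext h)
  have hpair : AlgebraicIndependent ℚ ![x, y] := by
    have hinj : Function.Injective (![⟨x, hxt⟩, ⟨y, hyt⟩] : Fin 2 → T) := by
      intro i j hij
      fin_cases i <;> fin_cases j <;>
        first
          | rfl
          | exact absurd (congrArg Subtype.val hij : x = y) hxyne
          | exact absurd ((congrArg Subtype.val hij).symm : x = y) hxyne
    have h3 := hTind.comp ![⟨x, hxt⟩, ⟨y, hyt⟩] hinj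
    have heq : (((↑) : T → ℂ) ∘ ![⟨x, hxt⟩, ⟨y, hyt⟩]) = ![x, y] := by
      funext i; fin_cases i <;> rfl
    rwa [heq] at h3
  obtain ⟨hx, hxy⟩ := (pair_iff x y).1 hpair
  set F := IntermediateField.adjoin ℚ S with hF
  have hSF : (Subfield.closure S : Set ℂ) ⊆ (F : Set ℂ) := by
    have hle : Subfield.closure S ≤ F.toSubfield :=
      Subfield.closure_le.2 (IntermediateField.subset_adjoin ℚ S)
    exact hle
  have hxF : IsAlgebraic F x := by
    have hm : x ∈ F := hSF (hTsub hxt)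
    exact isAlgebraic_algebraMap (⟨x, hm⟩ : F)
  have hyF : IsAlgebraic F y := by
    have hm : y ∈ F := hSF (hTsub hyt)
    exact isAlgebraic_algebraMap (⟨y, hm⟩ : F)
  have hexp : Complex.exp (Complex.I * (Real.pi : ℂ)) = -1 := by
    rw [mul_comm]; exact Complex.exp_pi_mul_I
  refine (pair_iff (Complex.exp 1) (Real.pi : ℂ)).2 ⟨?_, ?_⟩
  · -- e transcendental
    by_contra hcon
    have hc : IsAlgebraic ℚ (Complex.exp 1) := not_not.1 hcon
    set X := IntermediateField.adjoin ℚ ({Complex.I * (Real.pi : ℂ)} : Set ℂ) with hX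
    have hsalg : ∀ a ∈ S, IsAlgebraic X a := by
      rintro a (⟨i, rfl⟩ | ⟨i, rfl⟩) <;> fin_cases i
      · exact mem_isAlg (one_mem X)
      · exact mem_isAlg (IntermediateField.mem_adjoin_simple_self ℚ _)
      · show IsAlgebraic X (Complex.exp 1)
        exact hc.tower_top ↥X
      · show IsAlgebraic X (Complex.exp (Complex.I * (Real.pi : ℂ)))
        rw [hexp]
        exact mem_isAlg (neg_mem (one_mem X))
    exact absurd (lemC hx hxy _ (alg_over_adjoin hsalg hxF) (alg_over_adjoin hsalg hyF)) not_false
  · -- π transcendental over ℚ[e]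
    by_contra hcon
    have hc : IsAlgebraic (Algebra.adjoin ℚ ({Complex.exp 1} : Set ℂ)) (Real.pi : ℂ) :=
      not_not.1 hcon
    set X := IntermediateField.adjoin ℚ ({Complex.exp 1} : Set ℂ) with hX
    have hπX : IsAlgebraic X (Real.pi : ℂ) := by
      have hle : Algebra.adjoin ℚ ({Complex.exp 1} : Set ℂ) ≤ X.toSubalgebra := by
        apply Algebra.adjoin_le
        intro t ht
        rcases ht with rfl
        exact IntermediateField.mem_adjoin_simple_self ℚ _
      exact hc.tower_top_of_subalgebra_le hle
    have hIX : IsAlgebraic X Complex.I := by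
      refine ⟨Polynomial.X ^ 2 + 1, ?_, ?_⟩
      · intro h0
        have := congrArg (fun p => Polynomial.eval 0 p) h0
        simp at this
      · simp [Complex.I_sq]
    have hIπX : IsAlgebraic X (Complex.I * (Real.pi : ℂ)) :=
      (hIX.isIntegral.mul hπX.isIntegral).isAlgebraic
    have hsalg : ∀ a ∈ S, IsAlgebraic X a := by
      rintro a (⟨i, rfl⟩ | ⟨i, rfl⟩) <;> fin_cases i
      · exact mem_isAlg (one_mem X)
      · exact hIπX
      · exact mem_isAlg (IntermediateField.mem_adjoin_simple_self ℚ _)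
      · show IsAlgebraic X (Complex.exp (Complex.I * (Real.pi : ℂ)))
        rw [hexp]
        exact mem_isAlg (neg_mem (one_mem X))
    exact absurd (lemC hx hxy _ (alg_over_adjoin hsalg hxF) (alg_over_adjoin hsalg hyF)) not_false
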